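/- In the quaternions, define operations on a left module over the quaternion ring by a^b = j·a + (1+i)·b, a_b = −j·a + (1+i)·b, a^{b̄} = j·a + (1−i)·b, a_{b̄} = −j·a + (1−i)·b. Then the second biquandle axiom holds: for all a, b, applying the left (barred) pair of operations to the outputs (a^b, b_a) of the right pair recovers (a, b), i.e., a = (a^b)^{overline of (b_a)} and b = (b_a)_{overline of (a^b)}. -/

import Mathlib

open Quaternion

noncomputable section

/-- The quaternion i. -/
def qi : ℍ[ℚ] := ⟨0, 1, 0, 0⟩
/-- The quaternion j. -/
def qj : ℍ[ℚ] := ⟨0, 0, 1, 0⟩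

variable {M : Type} [AddCommGroup M] [Module ℍ[ℚ] M]

/-- a^b = j·a + (1+i)·b -/
def upR (a b : M) : M := qj • a + (1 + qi) • b
/-- a_b = −j·a + (1+i)·b -/
def dnR (a b : M) : M := -(qj • a) + (1 + qi) • b
/-- a^{b̄} = j·a + (1−i)·b -/
def upL (a b : M) : M := qj • a + (1 - qi) • b
/-- a_{b̄} = −j·a + (1−i)·b -/
def dnL (a b : M) : M := -(qj • a) + (1 - qi) • b

lemma e1' : qj * qj = -1 := by
  ext <;> simp [Quaternion.re_mul, Quaternion.imI_mul, Quaternion.imJ_mul, Quaternion.imK_mul] <;> simp [qi, qj]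

lemma e2' : (1 - qi) * (1 + qi) = 2 := by
  rw [(by norm_num : (2 : ℍ[ℚ]) = 1 + 1)]
  ext <;> simp [Quaternion.re_mul, Quaternion.imI_mul, Quaternion.imJ_mul, Quaternion.imK_mul] <;> simp [qi, qj]

lemma e3' : qj * (1 + qi) = (1 - qi) * qj := by
  ext <;> simp [Quaternion.re_mul, Quaternion.imI_mul, Quaternion.imJ_mul, Quaternion.imK_mul] <;> simp [qi, qj]

/-- The second biquandle axiom for the quaternionic biquandle: for all a, b,
a = (a^b)^{overline{b_a}} and b = (b_a)_{overline{a^b}}. -/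
theorem stmt_3 (a b : M) :
    upL (upR a b) (dnR b a) = a ∧ dnL (dnR b a) (upR a b) = b := by
  constructor
  · show qj • (qj • a + (1 + qi) • b) + (1 - qi) • (-(qj • b) + (1 + qi) • a) = a
    rw [smul_add, smul_add, smul_neg, smul_smul, smul_smul, smul_smul, smul_smul,
      e1', e2', e3', two_smul, neg_one_smul]
    abel
  · show -(qj • (-(qj • b) + (1 + qi) • a)) + (1 - qi) • (qj • a + (1 + qi) • b) = b
    rw [smul_add, smul_add, smul_neg, smul_smul, smul_smul, smul_smul, smul_smul,
      e1', e2', two_smul, neg_one_smul, e3']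
    abel

end
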